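/- Under Assumption 1, let the chain start from x₀ distributed according to μ and set σ = sup{l ≥ 0 : x_l ∈ A and l < τ_B}, where τ_B is the first hitting time of B. Then for every k ≥ 0 the following hold: (i) for all x, y ∈ V⁻ with P(x_k = y, σ ≥ k) > 0, P(x_{k+1} = x, σ ≥ k+1 | x_k = y, σ ≥ k) = p(x|y)(1−q(x))/(1−q(y)); (ii) for all y ∈ A with P(x_k = y, σ ≥ k) > 0, P(σ = k | x_k = y, σ ≥ k) = Σ_{z∈V} p(z|y) q(z). In other words, the ensemble of nonreactive segments (x₀, …, x_σ) is generated by the Markov chain on V⁻ ∪ {0} with transition matrix p̄ and initial distribution μ. -/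

import Mathlib

open scoped ENNReal

-- `pathProb p x l` : probability that the chain with transition matrix `p` follows the
-- finite path `x :: l` (here `p x y` is the probability `p(y|x)` of jumping from `x` to `y`).
noncomputable def pathProb {V : Type*} (p : V → V → ℝ) : V → List V → ℝ≥0∞
  | _, [] => 1
  | x, y :: ys => ENNReal.ofReal (p x y) * pathProb p y ys

-- The finite path lies outside `S ∪ T` at all nodes except its last one, which lies in `S`;
-- such paths realize exactly the event `τ_S < τ_T`.
def HitsFirst {V : Type*} (S T : Finset V) : List V → Prop
  | [] => False
  | [x] => x ∈ S
  | x :: y :: ys => x ∉ S ∧ x ∉ T ∧ HitsFirst S T (y :: ys)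

-- `hitProb p S T x` : the probability `P(τ_{S,x} < τ_{T,x})` that the chain started at `x`
-- hits `S` strictly before `T`, written as the sum over all first-passage paths to `S`.
open Classical in
noncomputable def hitProb {V : Type*} (p : V → V → ℝ) (S T : Finset V) (x : V) : ℝ≥0∞ :=
  ∑' l : List V, if HitsFirst S T (x :: l) then pathProb p x l else 0

-- `S` (with `S = A` or `S = B`) is reachable from `x` : there is a finite path of positive
-- transition probabilities from `x` to `S` whose interior nodes avoid `A ∪ B`.
def ReachableFrom {V : Type*} [DecidableEq V] (p : V → V → ℝ) (A B S : Finset V) (x : V) :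
    Prop :=
  ∃ (k : ℕ) (c : ℕ → V), c 0 = x ∧ c k ∈ S ∧
    (∀ l, 1 ≤ l → l ≤ k - 1 → c l ∉ A ∪ B) ∧
    ∀ l, l < k → 0 < p (c l) (c (l + 1))

-- Assumption 1 of the paper.
def Assumption1 {V : Type*} [Fintype V] [DecidableEq V] (p : V → V → ℝ) (A B : Finset V) :
    Prop :=
  ((A ∪ B)ᶜ : Finset V).Nonempty ∧
  (∀ x ∈ (A ∪ B)ᶜ, ReachableFrom p A B A x ∨ ReachableFrom p A B B x) ∧
  ∀ x ∈ A, ReachableFrom p A B B x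

open Classical

-- Probability of the finite trajectory segment `c = (x_0, …, x_k)` when the initial state
-- `x_0` is distributed according to `μ`.
noncomputable def iniProb {V : Type*} (p : V → V → ℝ) (μ : V → ℝ) : List V → ℝ≥0∞
  | [] => 0
  | x :: xs => ENNReal.ofReal (μ x) * pathProb p x xs

-- Probability `P(x_0 ∉ B, …, x_k ∉ B, x_k = y)` of the cylinder event that the chain,
-- started from `μ`, avoids `B` up to time `k` and sits at `y` at time `k`.
noncomputable def prefixProb {V : Type*} (p : V → V → ℝ) (B : Finset V) (μ : V → ℝ)
    (k : ℕ) (y : V) : ℝ≥0∞ :=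
  ∑' c : List V,
    if c.length = k + 1 ∧ c.getLast? = some y ∧ ∀ z ∈ c, z ∉ B then iniProb p μ c else 0

-- Probability of the cylinder event that the chain, started from `μ`, avoids `B` up to time
-- `k + 1`, sits at `y` at time `k` and at `x` at time `k + 1`.
noncomputable def prefixProb2 {V : Type*} (p : V → V → ℝ) (B : Finset V) (μ : V → ℝ)
    (k : ℕ) (y x : V) : ℝ≥0∞ :=
  ∑' c : List V,
    if c.length = k + 2 ∧ (∃ c' : List V, c = c' ++ [y, x]) ∧ ∀ z ∈ c, z ∉ B then
      iniProb p μ c else 0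

-- `P(x_k = y, σ ≥ k)` : the chain avoids `B` up to time `k`, sits at `y` at time `k`, and
-- afterwards visits `A` before hitting `B` (so that the last hitting time `σ` of `A` before
-- `τ_B` satisfies `σ ≥ k`).
noncomputable def probAtSigmaGe {V : Type*} (p : V → V → ℝ) (A B : Finset V) (μ : V → ℝ)
    (k : ℕ) (y : V) : ℝ≥0∞ :=
  prefixProb p B μ k y * hitProb p A B y

-- `P(x_{k+1} = x, x_k = y, σ ≥ k + 1)`.
noncomputable def probStepSigmaGe {V : Type*} (p : V → V → ℝ) (A B : Finset V) (μ : V → ℝ)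
    (k : ℕ) (y x : V) : ℝ≥0∞ :=
  prefixProb2 p B μ k y x * hitProb p A B x

-- `P(x_k = y, σ = k)` for `y ∈ A` : the chain avoids `B` up to time `k`, sits at `y ∈ A` at
-- time `k`, and after the next jump hits `B` before returning to `A`.
noncomputable def probAtSigmaEq {V : Type*} [Fintype V] (p : V → V → ℝ) (A B : Finset V)
    (μ : V → ℝ) (k : ℕ) (y : V) : ℝ≥0∞ :=
  prefixProb p B μ k y * ∑ z, ENNReal.ofReal (p y z) * hitProb p B A z

section Aux

variable {V : Type*} [Fintype V] [DecidableEq V]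

@[simp] lemma hitsFirst_nil (S T : Finset V) : ¬ HitsFirst S T ([] : List V) :=
  fun h => h

@[simp] lemma hitsFirst_single (S T : Finset V) (x : V) :
    HitsFirst S T [x] ↔ x ∈ S := Iff.rfl

@[simp] lemma hitsFirst_cons_cons (S T : Finset V) (x y : V) (ys : List V) :
    HitsFirst S T (x :: y :: ys) ↔ x ∉ S ∧ x ∉ T ∧ HitsFirst S T (y :: ys) := Iff.rfl

@[simp] lemma pathProb_nil (p : V → V → ℝ) (x : V) : pathProb p x [] = 1 := rfl

@[simp] lemma pathProb_cons (p : V → V → ℝ) (x y : V) (ys : List V) :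
    pathProb p x (y :: ys) = ENNReal.ofReal (p x y) * pathProb p y ys := rfl

lemma pathProb_ne_top (p : V → V → ℝ) : ∀ (l : List V) (x : V), pathProb p x l ≠ ⊤ := by
  intro l
  induction l with
  | nil => intro x; simp
  | cons a t ih =>
      intro x
      simp only [pathProb_cons]
      exact ENNReal.mul_ne_top ENNReal.ofReal_ne_top (ih a)

/-- Reindexing a sum over lists by splitting off the head. -/
lemma tsum_list_cons (f : List V → ℝ≥0∞) (h0 : f [] = 0) :
    ∑' l : List V, f l = ∑ z : V, ∑' zs : List V, f (z :: zs) := by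
  have hinj : Function.Injective (fun q : V × List V => q.1 :: q.2) := by
    rintro ⟨a, l⟩ ⟨b, m⟩ h
    simp only [List.cons.injEq] at h
    simp [h.1, h.2]
  have hsupp : Function.support f ⊆ Set.range (fun q : V × List V => q.1 :: q.2) := by
    intro l hl
    cases l with
    | nil => exact absurd h0 hl
    | cons a t => exact ⟨(a, t), rfl⟩
  rw [← hinj.tsum_eq hsupp, ENNReal.tsum_prod', tsum_fintype]

lemma hitProb_of_mem (p : V → V → ℝ) (S T : Finset V) {x : V} (hx : x ∈ S) :
    hitProb p S T x = 1 := by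
  unfold hitProb
  rw [tsum_eq_single ([] : List V)]
  · simp [hx]
  · intro l hl
    cases l with
    | nil => exact absurd rfl hl
    | cons z zs => simp [hx]

lemma hitProb_of_mem_other (p : V → V → ℝ) (S T : Finset V) {x : V}
    (hxT : x ∈ T) (hxS : x ∉ S) : hitProb p S T x = 0 := by
  unfold hitProb
  convert tsum_zero with l
  cases l with
  | nil => simp [hxS]
  | cons z zs => simp [hxT]

lemma hitProb_rec (p : V → V → ℝ) (S T : Finset V) {x : V}
    (hxS : x ∉ S) (hxT : x ∉ T) :
    hitProb p S T x = ∑ z, ENNReal.ofReal (p x z) * hitProb p S T z := by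
  unfold hitProb
  rw [tsum_list_cons _ (by simp [hxS])]
  refine Finset.sum_congr rfl fun z _ => ?_
  rw [← ENNReal.tsum_mul_left]
  refine tsum_congr fun zs => ?_
  by_cases h : HitsFirst S T (z :: zs)
  · rw [if_pos h, if_pos ⟨hxS, hxT, h⟩, pathProb_cons]
  · rw [if_neg h, if_neg (fun hh => h hh.2.2), mul_zero]

lemma hitsFirst_not_both {A B : Finset V} (hAB : Disjoint A B) :
    ∀ l : List V, HitsFirst A B l → HitsFirst B A l → False := by
  intro l
  induction l with
  | nil => intro h; exact h.elim
  | cons a t ih =>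
      cases t with
      | nil => intro h1 h2; exact Finset.disjoint_left.mp hAB h1 h2
      | cons b t' => intro h1 h2; exact ih h1.2.2 h2.2.2

/-- Truncated (finite-horizon) first-passage sums. -/
noncomputable def truncHit (p : V → V → ℝ) (A B : Finset V) (n : ℕ) (x : V) : ℝ≥0∞ :=
  ∑' l : List V,
    if (HitsFirst A B (x :: l) ∨ HitsFirst B A (x :: l)) ∧ l.length ≤ n then pathProb p x l
    else 0

lemma truncHit_of_mem (p : V → V → ℝ) {A B : Finset V} {x : V} (hx : x ∈ A ∪ B) (n : ℕ) :
    truncHit p A B n x = 1 := by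
  rw [Finset.mem_union] at hx
  unfold truncHit
  rw [tsum_eq_single ([] : List V)]
  · rw [if_pos ⟨by simpa using hx, by simp⟩]
    rfl
  · intro l hl
    cases l with
    | nil => exact absurd rfl hl
    | cons z zs =>
        rw [if_neg]
        rintro ⟨h | h, -⟩
        · rcases hx with hx' | hx'
          · exact h.1 hx'
          · exact h.2.1 hx'
        · rcases hx with hx' | hx'
          · exact h.2.1 hx'
          · exact h.1 hx'

lemma truncHit_zero (p : V → V → ℝ) {A B : Finset V} {x : V} (hx : x ∉ A ∪ B) :
    truncHit p A B 0 x = 0 := by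
  rw [Finset.mem_union, not_or] at hx
  unfold truncHit
  convert tsum_zero with l
  cases l with
  | nil => simp [hx.1, hx.2]
  | cons z zs => simp

lemma truncHit_succ (p : V → V → ℝ) {A B : Finset V} {x : V} (hx : x ∉ A ∪ B) (n : ℕ) :
    truncHit p A B (n + 1) x = ∑ z, ENNReal.ofReal (p x z) * truncHit p A B n z := by
  rw [Finset.mem_union, not_or] at hx
  unfold truncHit
  rw [tsum_list_cons _ (by simp [hx.1, hx.2])]
  refine Finset.sum_congr rfl fun z _ => ?_
  rw [← ENNReal.tsum_mul_left]
  refine tsum_congr fun zs => ?_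
  by_cases h : (HitsFirst A B (z :: zs) ∨ HitsFirst B A (z :: zs)) ∧ zs.length ≤ n
  · rw [if_pos, if_pos h, pathProb_cons]
    exact ⟨h.1.imp (fun hh => ⟨hx.1, hx.2, hh⟩) (fun hh => ⟨hx.2, hx.1, hh⟩),
      by simpa using h.2⟩
  · rw [if_neg, if_neg h, mul_zero]
    rintro ⟨h1, h2⟩
    exact h ⟨h1.imp (fun hh => hh.2.2) (fun hh => hh.2.2), by simpa using h2⟩

lemma truncHit_le_one (p : V → V → ℝ) {A B : Finset V}
    (hp0 : ∀ x y, 0 ≤ p x y) (hp1 : ∀ x, ∑ y, p x y = 1) :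
    ∀ (n : ℕ) (x : V), truncHit p A B n x ≤ 1 := by
  intro n
  induction n with
  | zero =>
      intro x
      by_cases hx : x ∈ A ∪ B
      · exact le_of_eq (truncHit_of_mem p hx 0)
      · exact le_of_eq_of_le (truncHit_zero p hx) zero_le
  | succ n ih =>
      intro x
      by_cases hx : x ∈ A ∪ B
      · exact le_of_eq (truncHit_of_mem p hx _)
      · rw [truncHit_succ p hx n]
        calc ∑ z, ENNReal.ofReal (p x z) * truncHit p A B n z
            ≤ ∑ z, ENNReal.ofReal (p x z) := by
              refine Finset.sum_le_sum fun z _ => ?_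
              exact (mul_le_mul_of_nonneg_left (ih z) zero_le).trans_eq (mul_one _)
          _ = 1 := by
              rw [← ENNReal.ofReal_sum_of_nonneg (fun i _ => hp0 x i), hp1 x,
                ENNReal.ofReal_one]

lemma hit_add_le_one (p : V → V → ℝ) {A B : Finset V} (hAB : Disjoint A B)
    (hp0 : ∀ x y, 0 ≤ p x y) (hp1 : ∀ x, ∑ y, p x y = 1) (x : V) :
    hitProb p A B x + hitProb p B A x ≤ 1 := by
  unfold hitProb
  rw [← ENNReal.tsum_add, ENNReal.tsum_eq_iSup_sum]
  refine iSup_le fun s => ?_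
  set n := s.sup List.length with hn
  calc (∑ l ∈ s, ((if HitsFirst A B (x :: l) then pathProb p x l else 0) +
          if HitsFirst B A (x :: l) then pathProb p x l else 0))
      ≤ ∑ l ∈ s, (if (HitsFirst A B (x :: l) ∨ HitsFirst B A (x :: l)) ∧ l.length ≤ n
          then pathProb p x l else 0) := by
        refine Finset.sum_le_sum fun l hl => ?_
        have hlen : l.length ≤ n := Finset.le_sup hl
        by_cases h1 : HitsFirst A B (x :: l)
        · have h2 : ¬ HitsFirst B A (x :: l) := fun h2 => hitsFirst_not_both hAB _ h1 h2
          rw [if_pos h1, if_neg h2, add_zero, if_pos ⟨Or.inl h1, hlen⟩]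
        · rw [if_neg h1, zero_add]
          by_cases h2 : HitsFirst B A (x :: l)
          · rw [if_pos h2, if_pos ⟨Or.inr h2, hlen⟩]
          · rw [if_neg h2]; exact zero_le
    _ ≤ truncHit p A B n x := ENNReal.sum_le_tsum s
    _ ≤ 1 := truncHit_le_one p hp0 hp1 n x

lemma hitProb_ne_top (p : V → V → ℝ) {A B : Finset V} (hAB : Disjoint A B)
    (hp0 : ∀ x y, 0 ≤ p x y) (hp1 : ∀ x, ∑ y, p x y = 1) (x : V) :
    hitProb p A B x ≠ ⊤ := by
  have h := hit_add_le_one p hAB hp0 hp1 x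
  exact ne_top_of_le_ne_top ENNReal.one_ne_top (le_trans le_self_add h)

/-- Under Assumption 1 the chain is a.s. absorbed in `A ∪ B`:
the two committors add up to one. -/
lemma hit_add_eq_one (p : V → V → ℝ) {A B : Finset V} (hAB : Disjoint A B)
    (hA : A.Nonempty)
    (hp0 : ∀ x y, 0 ≤ p x y) (hp1 : ∀ x, ∑ y, p x y = 1)
    (h1 : Assumption1 p A B) (x : V) :
    hitProb p A B x + hitProb p B A x = 1 := by
  have hle : ∀ x : V, hitProb p A B x + hitProb p B A x ≤ 1 :=
    hit_add_le_one p hAB hp0 hp1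
  have hne : ∀ x : V, hitProb p A B x + hitProb p B A x ≠ ⊤ :=
    fun x => ne_top_of_le_ne_top ENNReal.one_ne_top (hle x)
  set s : V → ℝ := fun x => (hitProb p A B x + hitProb p B A x).toReal with hs
  have hs_le : ∀ x, s x ≤ 1 := by
    intro x
    have := ENNReal.toReal_mono ENNReal.one_ne_top (hle x)
    simpa using this
  have hsC : ∀ x ∈ A ∪ B, s x = 1 := by
    intro x hx
    rw [Finset.mem_union] at hx
    rcases hx with hx | hx
    · have h1' : hitProb p A B x = 1 := hitProb_of_mem p A B hx
      have h2' : hitProb p B A x = 0 :=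
        hitProb_of_mem_other p B A hx (Finset.disjoint_left.mp hAB hx)
      simp [hs, h1', h2']
    · have h1' : hitProb p A B x = 0 :=
        hitProb_of_mem_other p A B hx (Finset.disjoint_right.mp hAB hx)
      have h2' : hitProb p B A x = 1 := hitProb_of_mem p B A hx
      simp [hs, h1', h2']
  have hrec : ∀ x ∉ A ∪ B, s x = ∑ z, p x z * s z := by
    intro x hx
    rw [Finset.mem_union, not_or] at hx
    have e1 : hitProb p A B x + hitProb p B A x
        = ∑ z, ENNReal.ofReal (p x z) * (hitProb p A B z + hitProb p B A z) := by
      rw [hitProb_rec p A B hx.1 hx.2, hitProb_rec p B A hx.2 hx.1,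
        ← Finset.sum_add_distrib]
      exact Finset.sum_congr rfl fun z _ => (mul_add _ _ _).symm
    have e2 : s x = ∑ z, (ENNReal.ofReal (p x z)
        * (hitProb p A B z + hitProb p B A z)).toReal := by
      rw [hs]
      simp only []
      rw [e1, ENNReal.toReal_sum]
      intro z _
      exact ENNReal.mul_ne_top ENNReal.ofReal_ne_top (hne z)
    rw [e2]
    refine Finset.sum_congr rfl fun z _ => ?_
    rw [ENNReal.toReal_mul, ENNReal.toReal_ofReal (hp0 x z)]
  have hVne : (Finset.univ : Finset V).Nonempty := ⟨hA.choose, Finset.mem_univ _⟩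
  set m := Finset.univ.inf' hVne s with hm
  have hm_le : ∀ x, m ≤ s x := fun x => Finset.inf'_le s (Finset.mem_univ x)
  have hprop : ∀ x, s x = m → x ∉ A ∪ B → ∀ z, 0 < p x z → s z = m := by
    intro x hxm hx z hz
    have hsum0 : ∑ w, p x w * (s w - m) = 0 := by
      have : ∑ w, p x w * (s w - m) = (∑ w, p x w * s w) - (∑ w, p x w) * m := by
        rw [Finset.sum_mul, ← Finset.sum_sub_distrib]
        exact Finset.sum_congr rfl fun w _ => by ring
      rw [this, hp1 x, one_mul, ← hrec x hx, hxm, sub_self]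
    have hterm := (Finset.sum_eq_zero_iff_of_nonneg
      (fun w _ => mul_nonneg (hp0 x w) (sub_nonneg.2 (hm_le w)))).mp hsum0 z
      (Finset.mem_univ z)
    rcases mul_eq_zero.mp hterm with h | h
    · exact absurd h hz.ne'
    · linarith [sub_eq_zero.mp h]
  have hm_one : m = 1 := by
    obtain ⟨x0, -, hx0⟩ := Finset.exists_mem_eq_inf' hVne s
    by_cases hx0C : x0 ∈ A ∪ B
    · rw [hm, hx0, hsC x0 hx0C]
    · have hreach := h1.2.1 x0 (Finset.mem_compl.mpr hx0C)
      have : ∃ S : Finset V, S ⊆ A ∪ B ∧ ReachableFrom p A B S x0 := by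
        rcases hreach with h | h
        · exact ⟨A, Finset.subset_union_left, h⟩
        · exact ⟨B, Finset.subset_union_right, h⟩
      obtain ⟨S, hSsub, k, c, hc0, hck, hint, hpos⟩ := this
      have hk0 : k ≠ 0 := by
        intro h
        subst h
        exact hx0C (hSsub (hc0 ▸ hck))
      have hnotC : ∀ l, l < k → c l ∉ A ∪ B := by
        intro l hl
        rcases Nat.eq_zero_or_pos l with rfl | hl0
        · rw [hc0]; exact hx0C
        · exact hint l hl0 (Nat.le_sub_one_of_lt hl)
      have hkey : ∀ l, l ≤ k → s (c l) = m := by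
        intro l
        induction l with
        | zero => intro _; rw [hc0, ← hx0]
        | succ n ih =>
            intro hl
            have hnk : n < k := hl
            exact hprop (c n) (ih hnk.le) (hnotC n hnk) (c (n + 1)) (hpos n hnk)
      have : s (c k) = 1 := hsC (c k) (hSsub hck)
      rw [← hkey k le_rfl, this]
  have hs_one : s x = 1 := le_antisymm (hs_le x) (hm_one ▸ hm_le x)
  have := ENNReal.ofReal_toReal (hne x)
  rw [show (hitProb p A B x + hitProb p B A x).toReal = s x from rfl, hs_one,
    ENNReal.ofReal_one] at this
  exact this.symm

lemma pathProb_snoc (p : V → V → ℝ) (x : V) :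
    ∀ (l : List V) (a y : V), (a :: l).getLast? = some y →
      pathProb p a (l ++ [x]) = pathProb p a l * ENNReal.ofReal (p y x) := by
  intro l
  induction l with
  | nil =>
      intro a y h
      simp only [List.getLast?_singleton, Option.some.injEq] at h
      subst h
      simp [mul_comm]
  | cons b bs ih =>
      intro a y h
      rw [List.getLast?_cons_cons] at h
      simp only [List.cons_append, pathProb_cons, ih b y h, mul_assoc]

lemma iniProb_snoc (p : V → V → ℝ) (μ : V → ℝ) {d : List V} {x y : V}
    (hd : d ≠ []) (hy : d.getLast? = some y) :
    iniProb p μ (d ++ [x]) = iniProb p μ d * ENNReal.ofReal (p y x) := by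
  cases d with
  | nil => exact absurd rfl hd
  | cons w ws =>
      show ENNReal.ofReal (μ w) * pathProb p w (ws ++ [x]) = _
      rw [pathProb_snoc p x ws w y hy]
      show _ = ENNReal.ofReal (μ w) * pathProb p w ws * ENNReal.ofReal (p y x)
      rw [mul_assoc]

lemma prefixProb2_eq (p : V → V → ℝ) (B : Finset V) (μ : V → ℝ) (k : ℕ) {x : V} (y : V)
    (hx : x ∉ B) :
    prefixProb2 p B μ k y x = prefixProb p B μ k y * ENNReal.ofReal (p y x) := by
  unfold prefixProb2 prefixProb
  rw [← ENNReal.tsum_mul_right]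
  have hinj : Function.Injective (fun d : List V => d ++ [x]) :=
    List.append_left_injective [x]
  refine Eq.trans (Function.Injective.tsum_eq (g := fun d : List V => d ++ [x])
    hinj ?_).symm (tsum_congr fun d => ?_)
  · intro c hc
    by_cases h : c.length = k + 2 ∧ (∃ c' : List V, c = c' ++ [y, x]) ∧ ∀ z ∈ c, z ∉ B
    · obtain ⟨-, ⟨c', rfl⟩, -⟩ := h
      exact ⟨c' ++ [y], by simp⟩
    · rw [Function.mem_support, if_neg h] at hc
      exact absurd rfl hc
  by_cases h : d.length = k + 1 ∧ d.getLast? = some y ∧ ∀ z ∈ d, z ∉ B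
  · obtain ⟨hlen, hlast, hmem⟩ := h
    have hdne : d ≠ [] := by
      intro hh
      rw [hh] at hlen
      simp at hlen
    rw [if_pos, if_pos ⟨hlen, hlast, hmem⟩, iniProb_snoc p μ hdne hlast]
    refine ⟨by simp [hlen], ⟨d.dropLast, ?_⟩, ?_⟩
    · have := List.dropLast_append_getLast? y hlast
      rw [← this]
      simp
    · intro z hz
      rcases List.mem_append.mp hz with hz | hz
      · exact hmem z hz
      · rw [List.mem_singleton.mp hz]; exact hx
  · rw [if_neg, if_neg h, zero_mul]
    rintro ⟨h1, ⟨c', hc⟩, h3⟩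
    apply h
    have hd : d = c' ++ [y] := by
      apply hinj
      simpa [List.append_assoc] using hc
    refine ⟨?_, ?_, ?_⟩
    · have : d.length + 1 = k + 2 := by simpa using h1
      omega
    · rw [hd]; exact List.getLast?_concat
    · intro z hz
      exact h3 z (by simp [hz])

lemma pathLen_sum (p : V → V → ℝ) (hp0 : ∀ x y, 0 ≤ p x y) (hp1 : ∀ x, ∑ y, p x y = 1) :
    ∀ (k : ℕ) (w : V),
      ∑' ws : List V, (if ws.length = k then pathProb p w ws else 0) = 1 := by
  intro k
  induction k with
  | zero =>
      intro w
      rw [tsum_eq_single ([] : List V)]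
      · simp
      · intro l hl
        cases l with
        | nil => exact absurd rfl hl
        | cons z zs => simp
  | succ k ih =>
      intro w
      rw [tsum_list_cons _ (by simp)]
      have : ∀ z : V, (∑' zs : List V,
          if (z :: zs).length = k + 1 then pathProb p w (z :: zs) else 0)
          = ENNReal.ofReal (p w z) := by
        intro z
        rw [show (∑' zs : List V,
            if (z :: zs).length = k + 1 then pathProb p w (z :: zs) else 0)
            = ∑' zs : List V, ENNReal.ofReal (p w z)
              * (if zs.length = k then pathProb p z zs else 0) from
          tsum_congr fun zs => by
            by_cases h : zs.length = k
            · rw [if_pos, if_pos h, pathProb_cons]; simpa using h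
            · rw [if_neg, if_neg h, mul_zero]; simpa using h]
        rw [ENNReal.tsum_mul_left, ih z, mul_one]
      rw [Finset.sum_congr rfl fun z _ => this z,
        ← ENNReal.ofReal_sum_of_nonneg (fun i _ => hp0 w i), hp1 w, ENNReal.ofReal_one]

lemma prefixProb_le_one (p : V → V → ℝ) (B : Finset V) (μ : V → ℝ)
    (hp0 : ∀ x y, 0 ≤ p x y) (hp1 : ∀ x, ∑ y, p x y = 1)
    (hμ0 : ∀ x, 0 ≤ μ x) (hμ1 : ∑ x, μ x = 1) (k : ℕ) (y : V) :
    prefixProb p B μ k y ≤ 1 := by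
  have hle : prefixProb p B μ k y
      ≤ ∑' c : List V, (if c.length = k + 1 then iniProb p μ c else 0) := by
    unfold prefixProb
    refine ENNReal.tsum_le_tsum fun c => ?_
    by_cases h : c.length = k + 1 ∧ c.getLast? = some y ∧ ∀ z ∈ c, z ∉ B
    · rw [if_pos h, if_pos h.1]
    · rw [if_neg h]; exact zero_le
  refine hle.trans ?_
  rw [tsum_list_cons _ (by simp)]
  have : ∀ w : V, (∑' ws : List V,
      if (w :: ws).length = k + 1 then iniProb p μ (w :: ws) else 0)
      = ENNReal.ofReal (μ w) := by
    intro w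
    rw [show (∑' ws : List V,
        if (w :: ws).length = k + 1 then iniProb p μ (w :: ws) else 0)
        = ∑' ws : List V, ENNReal.ofReal (μ w)
          * (if ws.length = k then pathProb p w ws else 0) from
      tsum_congr fun ws => by
        by_cases h : ws.length = k
        · rw [if_pos, if_pos h]; rfl; simpa using h
        · rw [if_neg, if_neg h, mul_zero]; simpa using h]
    rw [ENNReal.tsum_mul_left, pathLen_sum p hp0 hp1 k w, mul_one]
  rw [Finset.sum_congr rfl fun w _ => this w,
    ← ENNReal.ofReal_sum_of_nonneg (fun i _ => hμ0 i), hμ1, ENNReal.ofReal_one]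

end Aux

/-- Under Assumption 1, let the chain start from `x₀` distributed according
to `μ` (a probability distribution on `A`) and let `σ` be the last hitting time of `A`
strictly before `τ_B`.  Then for every `k ≥ 0`:
(i) for all `x, y ∈ V⁻ = {q < 1}` (where `q = hitProb p B A` is the committor) with
`P(x_k = y, σ ≥ k) > 0`, the conditional probability satisfies
`P(x_{k+1} = x, σ ≥ k+1 | x_k = y, σ ≥ k) = p(x|y)·(1 − q(x))/(1 − q(y)) = p̄(x|y)`;
(ii) for all `y ∈ A` with `P(x_k = y, σ ≥ k) > 0`,
`P(σ = k | x_k = y, σ ≥ k) = Σ_{z∈V} p(z|y) q(z) = p̄(0|y)`.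
In other words, the ensemble of nonreactive segments `(x₀, …, x_σ)` is generated by the
Markov chain on `V⁻ ∪ {0}` with transition matrix `p̄` and initial distribution `μ`. -/
theorem nonreactive_segments_generated_by_pbar {V : Type*} [Fintype V] [DecidableEq V]
    (p : V → V → ℝ) (A B : Finset V)
    (hAB : Disjoint A B) (hA : A.Nonempty) (hB : B.Nonempty)
    (hp0 : ∀ x y, 0 ≤ p x y) (hp1 : ∀ x, ∑ y, p x y = 1)
    (h1 : Assumption1 p A B)
    (μ : V → ℝ) (hμ0 : ∀ x, 0 ≤ μ x) (hμA : ∀ x ∉ A, μ x = 0) (hμ1 : ∑ x ∈ A, μ x = 1) :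
    (∀ (k : ℕ) (x y : V), hitProb p B A x < 1 → hitProb p B A y < 1 →
        0 < probAtSigmaGe p A B μ k y →
        probStepSigmaGe p A B μ k y x / probAtSigmaGe p A B μ k y
          = ENNReal.ofReal (p y x) * (1 - hitProb p B A x) / (1 - hitProb p B A y)) ∧
    (∀ (k : ℕ) (y : V), y ∈ A →
        0 < probAtSigmaGe p A B μ k y →
        probAtSigmaEq p A B μ k y / probAtSigmaGe p A B μ k y
          = ∑ z, ENNReal.ofReal (p y z) * hitProb p B A z) := by
  have hμ1' : ∑ x, μ x = 1 := by
    rw [← hμ1]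
    exact (Finset.sum_subset (Finset.subset_univ A) fun x _ hx => hμA x hx).symm
  have hsum : ∀ x : V, hitProb p A B x + hitProb p B A x = 1 :=
    hit_add_eq_one p hAB hA hp0 hp1 h1
  have hqtop : ∀ x : V, hitProb p B A x ≠ ⊤ :=
    hitProb_ne_top p hAB.symm (fun x y => hp0 x y) hp1
  have hAeq : ∀ x : V, hitProb p A B x = 1 - hitProb p B A x :=
    fun x => ENNReal.eq_sub_of_add_eq (hqtop x) (hsum x)
  constructor
  · intro k x y hqx hqy hpos
    have hxB : x ∉ B := fun h => hqx.ne (hitProb_of_mem p B A h)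
    have hpre0 : prefixProb p B μ k y ≠ 0 := by
      intro h
      rw [probAtSigmaGe, h, zero_mul] at hpos
      exact lt_irrefl _ hpos
    have hpretop : prefixProb p B μ k y ≠ ⊤ :=
      ne_top_of_le_ne_top ENNReal.one_ne_top
        (prefixProb_le_one p B μ hp0 hp1 hμ0 hμ1' k y)
    rw [probStepSigmaGe, probAtSigmaGe, prefixProb2_eq p B μ k y hxB,
      hAeq x, hAeq y, mul_assoc]
    exact ENNReal.mul_div_mul_left _ _ hpre0 hpretop
  · intro k y hyA hpos
    have hpre0 : prefixProb p B μ k y ≠ 0 := by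
      intro h
      rw [probAtSigmaGe, h, zero_mul] at hpos
      exact lt_irrefl _ hpos
    have hpretop : prefixProb p B μ k y ≠ ⊤ :=
      ne_top_of_le_ne_top ENNReal.one_ne_top
        (prefixProb_le_one p B μ hp0 hp1 hμ0 hμ1' k y)
    rw [probAtSigmaEq, probAtSigmaGe, hitProb_of_mem p A B hyA,
      ENNReal.mul_div_mul_left _ _ hpre0 hpretop]
    simp
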